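/- Suppose n divides m with p = m/n. The partition of strip type derived from λ = (p^n) (n rows of p) and μ = (1^m) (m rows of 1) is ν = (n^p) (p rows of n). Consequently, the maximal lexicographic spectrum of bipartite states with margins (1/n)I_n and (1/m)I_m is the uniform distribution (1/p, ..., 1/p) of length p. -/

import Mathlib

/-- One pass of the strip-type construction for a pair of rectangular partitions,
represented as pairs `(a, r)` (r rows of length a) and `(b, s)`.  At each step the
next term of the derived partition is `|λ ∩ μ| = min a b * min r s`, and the pair is
replaced by the complements `λ \ (λ∩μ)` and `μ \ (λ∩μ)` (again rectangles).  The
first argument is a fuel parameter. -/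
def rectStripAux : ℕ → ℕ × ℕ → ℕ × ℕ → List ℕ
  | 0, _, _ => []
  | fuel + 1, (a, r), (b, s) =>
    if a = 0 ∨ r = 0 ∨ b = 0 ∨ s = 0 then []
    else if b ≤ a then (b * r) :: rectStripAux fuel (a - b, r) (b, s - r)
    else (a * s) :: rectStripAux fuel (a, r - s) (b - a, s)

/-- The partition of strip type derived from the pair of rectangles `(a^r)`, `(b^s)`. -/
def rectStrip (p q : ℕ × ℕ) : List ℕ :=
  rectStripAux (p.1 * p.2 + 1) p q

open ComplexOrder

/-- Partial trace over the second tensor factor. -/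
noncomputable def trB {n m : ℕ} (ρ : Matrix (Fin n × Fin m) (Fin n × Fin m) ℂ) :
    Matrix (Fin n) (Fin n) ℂ :=
  fun a a' => ∑ b : Fin m, ρ (a, b) (a', b)

/-- Partial trace over the first tensor factor. -/
noncomputable def trA {n m : ℕ} (ρ : Matrix (Fin n × Fin m) (Fin n × Fin m) ℂ) :
    Matrix (Fin m) (Fin m) ℂ :=
  fun b b' => ∑ a : Fin n, ρ (a, b) (a, b')

/-- The spectrum of a Hermitian matrix, as the list of eigenvalues in decreasing order. -/
noncomputable def specList {ι : Type*} [Fintype ι] [DecidableEq ι]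
    (ρ : Matrix ι ι ℂ) (hρ : ρ.IsHermitian) : List ℝ :=
  ((Multiset.map hρ.eigenvalues Finset.univ.val).sort (· ≤ ·)).reverse

/-- Lexicographic order (non-strict) on lists of reals. -/
def lexLe (l₁ l₂ : List ℝ) : Prop := l₁ = l₂ ∨ List.Lex (· < ·) l₁ l₂

open Matrix

section Helpers1
lemma part1 (n : ℕ) (hn : 0 < n) : ∀ k fuel, k < fuel →
    rectStripAux fuel (k, n) (1, n * k) = List.replicate k n := by
  intro k
  induction k with
  | zero => intro fuel hf; cases fuel with
    | zero => omega
    | succ f => simp [rectStripAux]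
  | succ k ih =>
    intro fuel hf
    cases fuel with
    | zero => omega
    | succ f =>
      have h1 : ¬((k+1) = 0 ∨ n = 0 ∨ (1:ℕ) = 0 ∨ n * (k+1) = 0) := by
        push_neg; refine ⟨by omega, by omega, by omega, by positivity⟩
      rw [rectStripAux, if_neg h1, if_pos (by omega)]
      have : n * (k+1) - n = n * k := by ring_nf; omega
      rw [one_mul, show (k+1) - 1 = k from rfl, this, ih f (by omega)]
      rfl

lemma lex_aux (c : ℝ) : ∀ (k q : ℕ) (l : List ℝ), l.length = k + q →
    (∀ x ∈ l, 0 ≤ x ∧ x ≤ c) → l.sum = k * c →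
    lexLe l (List.replicate k c ++ List.replicate q 0) := by
  intro k
  induction k with
  | zero =>
    intro q l hlen hx hsum
    left
    simp only [List.replicate_zero, List.nil_append]
    have h0 : ∀ x ∈ l, x = 0 := by
      intro x hxl
      by_contra hne
      have hpos : 0 < x := lt_of_le_of_ne (hx x hxl).1 (Ne.symm hne)
      have : 0 < l.sum := by
        calc (0:ℝ) < x := hpos
        _ ≤ l.sum := List.single_le_sum (fun y hy => (hx y hy).1) x hxl
      simp [hsum] at this
    rw [List.eq_replicate_iff.mpr ⟨by simpa using hlen, h0⟩]
  | succ k ih =>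
    intro q l hlen hx hsum
    match l with
    | [] => simp at hlen; omega
    | a :: t =>
      rcases lt_or_eq_of_le (hx a (by simp)).2 with hlt | heq
      · right
        exact List.Lex.rel hlt
      · subst heq
        have ht : lexLe t (List.replicate k a ++ List.replicate q 0) := by
          apply ih q t (by simp at hlen ⊢; omega) (fun x hxt => hx x (by simp [hxt]))
          have : a + t.sum = (k+1) * a := by simpa using hsum
          push_cast
          linarith
        rcases ht with h | h
        · left; rw [List.replicate_succ, List.cons_append, h]
        · right; rw [List.replicate_succ, List.cons_append]
          exact List.Lex.cons h

lemma binary_sorted (c : ℝ) (hc : 0 < c) : ∀ l : List ℝ, l.Pairwise (· ≥ ·) →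
    (∀ x ∈ l, x = 0 ∨ x = c) →
    l = List.replicate (l.count c) c ++ List.replicate (l.length - l.count c) 0 := by
  intro l
  induction l with
  | nil => simp
  | cons a t ih =>
    intro hs hx
    rcases hx a (by simp) with h0 | hc'
    · subst h0
      have hall : ∀ x ∈ t, x = 0 := by
        intro x hxt
        rcases hx x (by simp [hxt]) with h | h
        · exact h
        · exfalso
          have := (List.pairwise_cons.mp hs).1 x hxt
          rw [h] at this; linarith
      have ht : t = List.replicate t.length 0 := List.eq_replicate_iff.mpr ⟨rfl, hall⟩
      have hcount : (0 :: t).count c = 0 := by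
        rw [List.count_cons, List.count_eq_zero.mpr, if_neg (by simpa using hc.ne)]
        intro hmem
        have := hall c hmem
        linarith
      rw [hcount]
      simp only [List.replicate_zero, List.nil_append]
      rw [show (0::t).length - 0 = t.length + 1 by simp, List.replicate_succ]
      rw [← ht]
    · subst hc'
      have ih' := ih (List.pairwise_cons.mp hs).2 (fun x hxt => hx x (by simp [hxt]))
      have hcount : (a :: t).count a = t.count a + 1 := by
        simp [List.count_cons]
      rw [hcount, List.replicate_succ', show (a::t).length - (t.count a + 1) = t.length - t.count a by
        have : t.count a ≤ t.length := List.count_le_length; simp]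
      conv_lhs => rw [ih']
      rw [← List.cons_append, ← List.replicate_succ, List.replicate_succ', List.append_assoc]

variable {ι : Type*} [Fintype ι] [DecidableEq ι] {ρ : Matrix ι ι ℂ} (h : ρ.IsHermitian)

lemma QM.specList_sorted : (specList ρ h).Pairwise (· ≥ ·) := by
  unfold specList
  rw [List.pairwise_reverse]
  exact List.Pairwise.imp (fun h => h) (Multiset.pairwise_sort _ (· ≤ ·))

lemma QM.specList_length : (specList ρ h).length = Fintype.card ι := by
  simp [specList]

lemma QM.mem_specList {x : ℝ} : x ∈ specList ρ h ↔ ∃ i, h.eigenvalues i = x := by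
  simp [specList, ← Multiset.mem_coe, Multiset.sort_eq]

lemma QM.specList_sum : (specList ρ h).sum = ∑ i, h.eigenvalues i := by
  rw [specList, List.sum_reverse, ← Multiset.sum_coe, Multiset.sort_eq]
  rfl

lemma QM.specList_count (c : ℝ) :
    (specList ρ h).count c = (Finset.univ.filter (fun i => h.eigenvalues i = c)).card := by
  rw [specList, List.count_reverse, ← Multiset.coe_count, Multiset.sort_eq,
    Multiset.count_map]
  rw [show ((Finset.univ.filter (fun i => h.eigenvalues i = c)).card)
      = Multiset.card (Multiset.filter (fun i => h.eigenvalues i = c) Finset.univ.val) from rfl]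
  congr 1
  exact Multiset.filter_congr (fun x _ => eq_comm)

lemma QM.trace_eq : ρ.trace = ∑ i, (h.eigenvalues i : ℂ) := by
  conv_lhs => rw [h.spectral_theorem, Unitary.conjStarAlgAut_apply]
  rw [Matrix.trace_mul_cycle]
  have hU : (star (h.eigenvectorUnitary : Matrix ι ι ℂ)) * h.eigenvectorUnitary = 1 :=
    Matrix.mem_unitaryGroup_iff'.mp h.eigenvectorUnitary.2
  rw [hU, one_mul, Matrix.trace_diagonal]
  rfl

variable {ι : Type*} [Fintype ι] [DecidableEq ι] {ρ : Matrix ι ι ℂ}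

lemma QM.conj_form (U : Matrix ι ι ℂ) (d : ι → ℂ) (x y : ι) :
    (U * Matrix.diagonal d * star U) x y = ∑ j, U x j * d j * star (U y j) := by
  rw [Matrix.mul_apply]
  exact Finset.sum_congr rfl fun j _ => by
    rw [Matrix.mul_diagonal, Matrix.star_apply]

lemma QM.sigma_psd (hρ : ρ.PosSemidef) (i : ι) :
    (ρ - (hρ.1.eigenvalues i : ℂ) •
      Matrix.vecMulVec (⇑(hρ.1.eigenvectorBasis i)) (star ⇑(hρ.1.eigenvectorBasis i))).PosSemidef := by
  set h := hρ.1
  set U : Matrix ι ι ℂ := (h.eigenvectorUnitary : Matrix ι ι ℂ) with hUdef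
  have hkey : (h.eigenvalues i : ℂ) •
      Matrix.vecMulVec (⇑(h.eigenvectorBasis i)) (star ⇑(h.eigenvectorBasis i))
      = U * Matrix.diagonal (fun j => if j = i then (h.eigenvalues i : ℂ) else 0) * star U := by
    ext x y
    rw [QM.conj_form, Fintype.sum_eq_single i (fun j hj => by simp [if_neg hj])]
    simp only [Matrix.smul_apply, Matrix.vecMulVec_apply, Pi.star_apply, smul_eq_mul, if_pos rfl]
    have hx : U x i = h.eigenvectorBasis i x := Matrix.IsHermitian.eigenvectorUnitary_apply h x i
    have hy : U y i = h.eigenvectorBasis i y := Matrix.IsHermitian.eigenvectorUnitary_apply h y i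
    rw [hx, hy]
    simp only [if_true]
    show (h.eigenvalues i : ℂ) * (h.eigenvectorBasis i x * star (h.eigenvectorBasis i y))
      = h.eigenvectorBasis i x * (h.eigenvalues i : ℂ) * star (h.eigenvectorBasis i y)
    ring
  have hspec := h.spectral_theorem
  rw [Unitary.conjStarAlgAut_apply, ← hUdef] at hspec
  have hpsd : Matrix.PosSemidef (Matrix.diagonal
      (fun j => (RCLike.ofReal (h.eigenvalues j) : ℂ) -
        if j = i then (h.eigenvalues i : ℂ) else 0)) := by
    apply Matrix.PosSemidef.diagonal
    intro j
    by_cases hj : j = i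
    · subst hj; simp
    · simp only [if_neg hj, sub_zero]
      exact Complex.zero_le_real.mpr (hρ.eigenvalues_nonneg j)
  have hd : Matrix.diagonal
      (fun j => (RCLike.ofReal (h.eigenvalues j) : ℂ) -
        if j = i then (h.eigenvalues i : ℂ) else 0)
      = Matrix.diagonal (RCLike.ofReal ∘ h.eigenvalues)
        - Matrix.diagonal (fun j => if j = i then (h.eigenvalues i : ℂ) else 0) := by
    ext a b
    by_cases hab : a = b <;> simp [Matrix.diagonal_apply, hab]
  have hmat : ρ - (h.eigenvalues i : ℂ) •
      Matrix.vecMulVec (⇑(h.eigenvectorBasis i)) (star ⇑(h.eigenvectorBasis i))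
      = U * Matrix.diagonal
        (fun j => (RCLike.ofReal (h.eigenvalues j) : ℂ) -
          if j = i then (h.eigenvalues i : ℂ) else 0) * star U := by
    rw [hd, Matrix.mul_sub, Matrix.sub_mul, ← hspec, ← hkey]
  rw [hmat]
  have := hpsd.mul_mul_conjTranspose_same U
  rwa [← Matrix.star_eq_conjTranspose] at this

lemma QM.ev_le (n m p : ℕ) (hn : 0 < n) (hp : 0 < p) (hm : m = n * p)
    (ρ : Matrix (Fin n × Fin m) (Fin n × Fin m) ℂ) (hρ : ρ.PosSemidef)
    (htrA : trA ρ = ((m : ℂ))⁻¹ • (1 : Matrix (Fin m) (Fin m) ℂ))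
    (i : Fin n × Fin m) : hρ.1.eigenvalues i ≤ (p:ℝ)⁻¹ := by
  classical
  set v : Fin n × Fin m → ℂ := ⇑(hρ.1.eigenvectorBasis i) with hv
  set lam : ℝ := hρ.1.eigenvalues i with hlam
  have hlam0 : 0 ≤ lam := hρ.eigenvalues_nonneg i
  have hσ := QM.sigma_psd hρ i
  have hunit : ∑ x, star (v x) * v x = 1 := by
    have h1 := orthonormal_iff_ite.mp (hρ.1.eigenvectorBasis.orthonormal) i i
    rw [if_pos rfl] at h1
    rw [← h1, PiLp.inner_apply]
    exact Finset.sum_congr rfl fun x _ => (RCLike.inner_apply' _ _).symm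
  set z : Fin n → Fin n → (Fin n × Fin m) → ℂ :=
    fun a a' x => if x.1 = a then v (a', x.2) else 0 with hz
  set A : Fin n → Fin n → ℂ := fun a a' => ∑ b, v (a, b) * star (v (a', b)) with hA
  have hqρ : ∀ a a', star (z a a') ⬝ᵥ (ρ *ᵥ z a a')
      = ∑ b, ∑ b', star (v (a', b)) * (ρ (a,b) (a,b') * v (a', b')) := by
    intro a a'
    simp only [dotProduct, Matrix.mulVec, Pi.star_apply]
    rw [Fintype.sum_prod_type]
    rw [Fintype.sum_eq_single a (fun a₁ ha₁ => Finset.sum_eq_zero fun b _ => by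
      simp [hz, if_neg ha₁])]
    refine Finset.sum_congr rfl fun b _ => ?_
    have hzab : z a a' (a, b) = v (a', b) := by simp [hz]
    have hinner2 : (∑ x' : Fin n × Fin m, ρ (a,b) x' * z a a' x')
        = ∑ b', ρ (a,b) (a,b') * v (a',b') := by
      rw [Fintype.sum_prod_type]
      rw [Fintype.sum_eq_single a (fun a₂ ha₂ => Finset.sum_eq_zero fun b' _ => by
        simp [hz, if_neg ha₂])]
      refine Finset.sum_congr rfl fun b' _ => ?_
      have : z a a' (a, b') = v (a', b') := by simp [hz]
      rw [this]
    rw [hzab, hinner2, Finset.mul_sum]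
  have hqv : ∀ a a', star (z a a') ⬝ᵥ ((Matrix.vecMulVec v (star v)) *ᵥ z a a')
      = (Complex.normSq (A a a') : ℂ) := by
    intro a a'
    have hmv : ∀ x, ((Matrix.vecMulVec v (star v)) *ᵥ z a a') x
        = v x * (∑ y, star (v y) * z a a' y) := by
      intro x
      simp only [Matrix.mulVec, dotProduct, Matrix.vecMulVec_apply, Pi.star_apply,
        Finset.mul_sum]
      exact Finset.sum_congr rfl fun y _ => by ring
    have hexp : star (z a a') ⬝ᵥ ((Matrix.vecMulVec v (star v)) *ᵥ z a a')
        = (∑ x, star (z a a' x) * v x) * (∑ y, star (v y) * z a a' y) := by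
      calc star (z a a') ⬝ᵥ ((Matrix.vecMulVec v (star v)) *ᵥ z a a')
          = ∑ x, star (z a a' x) * (v x * (∑ y, star (v y) * z a a' y)) := by
            simp only [dotProduct, Pi.star_apply]
            exact Finset.sum_congr rfl fun x _ => by rw [hmv]
        _ = (∑ x, star (z a a' x) * v x) * (∑ y, star (v y) * z a a' y) := by
            rw [Finset.sum_mul]
            exact Finset.sum_congr rfl fun x _ => by ring
    rw [hexp]
    have hc1 : (∑ x, star (z a a' x) * v x) = A a a' := by
      rw [Fintype.sum_prod_type]
      rw [Fintype.sum_eq_single a (fun a₁ ha₁ => Finset.sum_eq_zero fun b _ => by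
        simp [hz, if_neg ha₁])]
      simp only [hA]
      refine Finset.sum_congr rfl fun b _ => ?_
      have : z a a' (a, b) = v (a', b) := by simp [hz]
      rw [this]; ring
    have hc2 : (∑ y, star (v y) * z a a' y) = star (A a a') := by
      have h1 : (∑ y : Fin n × Fin m, star (v y) * z a a' y)
          = ∑ b, star (v (a,b)) * v (a',b) := by
        rw [Fintype.sum_prod_type]
        rw [Fintype.sum_eq_single a (fun a₁ ha₁ => Finset.sum_eq_zero fun b _ => by
          simp [hz, if_neg ha₁])]
        refine Finset.sum_congr rfl fun b _ => ?_
        have : z a a' (a, b) = v (a', b) := by simp [hz]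
        rw [this]
      rw [h1]
      simp only [hA, star_sum]
      exact Finset.sum_congr rfl fun b _ => by rw [star_mul', star_star]
    rw [hc1, hc2]
    rw [show star (A a a') = (starRingEnd ℂ) (A a a') from rfl, Complex.mul_conj]
  set t : ℝ := ∑ a' : Fin n, ∑ a : Fin n, Complex.normSq (A a a') with ht
  have hsum : (0:ℂ) ≤ (((m:ℝ)⁻¹ - lam * t : ℝ) : ℂ) := by
    have hpos : (0:ℂ) ≤ ∑ a' : Fin n, ∑ a : Fin n,
        star (z a a') ⬝ᵥ ((ρ - (lam:ℂ) • Matrix.vecMulVec v (star v)) *ᵥ z a a') :=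
      Finset.sum_nonneg fun a' _ => Finset.sum_nonneg fun a _ => hσ.dotProduct_mulVec_nonneg _
    have hterm : ∀ a' a : Fin n,
        star (z a a') ⬝ᵥ ((ρ - (lam:ℂ) • Matrix.vecMulVec v (star v)) *ᵥ z a a')
        = star (z a a') ⬝ᵥ (ρ *ᵥ z a a') - (lam:ℂ) * (Complex.normSq (A a a') : ℂ) := by
      intro a' a
      rw [Matrix.sub_mulVec, dotProduct_sub, Matrix.smul_mulVec,
        dotProduct_smul, smul_eq_mul, hqv]
    have hρpart : ∑ a' : Fin n, ∑ a : Fin n, star (z a a') ⬝ᵥ (ρ *ᵥ z a a')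
        = (((m:ℝ)⁻¹ : ℝ) : ℂ) := by
      have hinner : ∀ a' : Fin n, ∑ a : Fin n, star (z a a') ⬝ᵥ (ρ *ᵥ z a a')
          = (m:ℂ)⁻¹ * ∑ b, star (v (a', b)) * v (a', b) := by
        intro a'
        rw [Finset.sum_congr rfl fun a _ => hqρ a a']
        rw [Finset.sum_comm]
        have hstep : ∀ b, ∑ a : Fin n, ∑ b', star (v (a', b)) * (ρ (a,b) (a,b') * v (a', b'))
            = (m:ℂ)⁻¹ * (star (v (a', b)) * v (a', b)) := by
          intro b
          rw [Finset.sum_comm]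
          have hcol : ∀ b', ∑ a : Fin n, star (v (a', b)) * (ρ (a,b) (a,b') * v (a', b'))
              = star (v (a', b)) * (trA ρ b b' * v (a', b')) := by
            intro b'
            rw [show trA ρ b b' = ∑ a : Fin n, ρ (a,b) (a,b') from rfl, Finset.sum_mul,
              Finset.mul_sum]
          rw [Finset.sum_congr rfl fun b' _ => hcol b']
          rw [htrA]
          simp only [Matrix.smul_apply, Matrix.one_apply, smul_eq_mul]
          rw [Fintype.sum_eq_single b (fun b' hb' => by
            rw [if_neg (fun hc => hb' hc.symm)]; ring)]
          rw [if_pos rfl]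
          ring
        rw [Finset.sum_congr rfl fun b _ => hstep b, ← Finset.mul_sum]
      rw [Finset.sum_congr rfl fun a' _ => hinner a', ← Finset.mul_sum]
      have h2 : ∑ a' : Fin n, ∑ b, star (v (a', b)) * v (a', b) = 1 := by
        rw [← hunit, Fintype.sum_prod_type]
      rw [h2, mul_one]
      push_cast
      ring
    have hexpand : ∑ a' : Fin n, ∑ a : Fin n,
        star (z a a') ⬝ᵥ ((ρ - (lam:ℂ) • Matrix.vecMulVec v (star v)) *ᵥ z a a')
        = (((m:ℝ)⁻¹ - lam * t : ℝ) : ℂ) := by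
      rw [Finset.sum_congr rfl fun a' _ => Finset.sum_congr rfl fun a _ => hterm a' a]
      rw [Finset.sum_congr rfl fun a' _ => Finset.sum_sub_distrib _ _,
        Finset.sum_sub_distrib, hρpart]
      have h3 : ∑ a' : Fin n, ∑ a : Fin n, (lam:ℂ) * (Complex.normSq (A a a') : ℂ)
          = ((lam * t : ℝ) : ℂ) := by
        push_cast [ht]
        rw [Finset.mul_sum]
        exact Finset.sum_congr rfl fun a' _ => by rw [Finset.mul_sum]
      rw [h3]
      push_cast
      ring
    rw [← hexpand]
    exact hpos
  have hreal : lam * t ≤ (m:ℝ)⁻¹ := by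
    have h0 := (Complex.zero_le_real).mp hsum
    linarith
  set r : Fin n → ℝ := fun a => ∑ b, Complex.normSq (v (a,b)) with hr
  have hAaa : ∀ a, A a a = ((r a : ℝ) : ℂ) := by
    intro a
    simp only [hA, hr]
    push_cast
    exact Finset.sum_congr rfl fun b _ => by
      rw [show star (v (a,b)) = (starRingEnd ℂ) (v (a,b)) from rfl, Complex.mul_conj]
  have hsum_r : ∑ a, r a = 1 := by
    have hcast : ((∑ a, r a : ℝ) : ℂ) = 1 := by
      push_cast [hr]
      rw [← hunit, Fintype.sum_prod_type]
      exact Finset.sum_congr rfl fun a _ => Finset.sum_congr rfl fun b _ => by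
        rw [mul_comm, show star (v (a,b)) = (starRingEnd ℂ) (v (a,b)) from rfl,
          Complex.mul_conj]
    exact_mod_cast hcast
  have hdiag : ∀ a, Complex.normSq (A a a) = (r a)^2 := by
    intro a
    rw [hAaa, Complex.normSq_ofReal, sq]
  have hle : ∑ a, (r a)^2 ≤ t := by
    rw [ht]
    calc ∑ a, (r a)^2 = ∑ a, Complex.normSq (A a a) :=
          Finset.sum_congr rfl fun a _ => (hdiag a).symm
      _ ≤ ∑ a' : Fin n, ∑ a : Fin n, Complex.normSq (A a a') :=
          Finset.sum_le_sum fun a' _ =>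
            Finset.single_le_sum (f := fun a => Complex.normSq (A a a'))
              (fun a _ => Complex.normSq_nonneg _) (Finset.mem_univ a')
  have h1n : (1:ℝ) ≤ (n:ℝ) * t := by
    have hcs := sq_sum_le_card_mul_sum_sq (s := (Finset.univ : Finset (Fin n))) (f := r)
    rw [hsum_r] at hcs
    simp only [Finset.card_univ, Fintype.card_fin] at hcs
    have : ((n:ℝ)) * (∑ a, (r a)^2) ≤ (n:ℝ) * t :=
      mul_le_mul_of_nonneg_left hle (by positivity)
    nlinarith
  have hmpos : (0:ℝ) < m := by
    have : 0 < n * p := Nat.mul_pos hn hp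
    rw [hm]; exact_mod_cast this
  have h2 : lam * 1 ≤ lam * ((n:ℝ) * t) := mul_le_mul_of_nonneg_left h1n hlam0
  have h4 : (n:ℝ) * (lam * t) ≤ (n:ℝ) * (m:ℝ)⁻¹ :=
    mul_le_mul_of_nonneg_left hreal (by positivity)
  have h5 : (n:ℝ) * (m:ℝ)⁻¹ = (p:ℝ)⁻¹ := by
    subst hm
    push_cast
    rw [mul_inv]
    rw [← mul_assoc, mul_inv_cancel₀ (by exact_mod_cast hn.ne'), one_mul]
  nlinarith

section Construction
variable (n m p : ℕ)

noncomputable def QMw (j : Fin p) : (Fin n × Fin m) → ℂ :=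
  fun x => if (x.2 : ℕ) = (x.1 : ℕ) + n * (j : ℕ) then 1 else 0

noncomputable def QMrho : Matrix (Fin n × Fin m) (Fin n × Fin m) ℂ :=
  fun x y => (m:ℂ)⁻¹ * ∑ j : Fin p, QMw n m p j x * QMw n m p j y

variable {n m p}

lemma QMhb (hm : m = n * p) (a : Fin n) (j : Fin p) : (a : ℕ) + n * (j : ℕ) < m := by
  rcases a with ⟨a, ha⟩; rcases j with ⟨j, hj⟩
  subst hm
  calc a + n * j < n + n * j := by omega
    _ = n * (j + 1) := by ring
    _ ≤ n * p := Nat.mul_le_mul_left n (by omega)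

lemma QMw_mul (j j' : Fin p) (x : Fin n × Fin m) :
    QMw n m p j x * QMw n m p j' x =
      if ((x.2 : ℕ) = (x.1 : ℕ) + n * (j : ℕ) ∧ (x.2 : ℕ) = (x.1 : ℕ) + n * (j' : ℕ))
      then 1 else 0 := by
  unfold QMw
  by_cases h1 : (x.2 : ℕ) = (x.1 : ℕ) + n * (j : ℕ) <;>
    by_cases h2 : (x.2 : ℕ) = (x.1 : ℕ) + n * (j' : ℕ) <;>
      simp [h1, h2]

lemma QMww (hn : 0 < n) (hm : m = n * p) (j j' : Fin p) :
    ∑ x : Fin n × Fin m, QMw n m p j x * QMw n m p j' x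
      = if j = j' then (n : ℂ) else 0 := by
  rw [Finset.sum_congr rfl fun x _ => QMw_mul j j' x, Fintype.sum_prod_type]
  by_cases hjj : j = j'
  · subst hjj
    rw [if_pos rfl]
    have hrow : ∀ a : Fin n, (∑ b : Fin m,
        if ((b : ℕ) = (a : ℕ) + n * (j : ℕ) ∧ (b : ℕ) = (a : ℕ) + n * (j : ℕ))
        then (1:ℂ) else 0) = 1 := by
      intro a
      rw [Fintype.sum_eq_single (⟨(a : ℕ) + n * (j : ℕ), QMhb hm a j⟩ : Fin m)
        (fun b hb => by
          rw [if_neg]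
          rintro ⟨h1, -⟩
          exact hb (Fin.ext h1))]
      rw [if_pos ⟨rfl, rfl⟩]
    rw [Finset.sum_congr rfl fun a _ => hrow a]
    simp
  · rw [if_neg hjj]
    refine Finset.sum_eq_zero fun a _ => Finset.sum_eq_zero fun b _ => ?_
    rw [if_neg]
    rintro ⟨h1, h2⟩
    have hnn : n * (j:ℕ) = n * (j':ℕ) := by omega
    exact hjj (Fin.ext (Nat.eq_of_mul_eq_mul_left hn hnn))

lemma QMw_real (j : Fin p) (x : Fin n × Fin m) : star (QMw n m p j x) = QMw n m p j x := by
  unfold QMw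
  by_cases h1 : (x.2 : ℕ) = (x.1 : ℕ) + n * (j : ℕ) <;> simp [h1]

lemma QMrho_herm : (QMrho n m p).IsHermitian := by
  ext x y
  simp only [conjTranspose_apply, QMrho, star_mul', star_inv₀, star_natCast, star_sum]
  congr 1
  refine Finset.sum_congr rfl fun j _ => ?_
  rw [QMw_real, QMw_real]
  ring

lemma QMrho_psd : (QMrho n m p).PosSemidef := by
  refine Matrix.PosSemidef.of_dotProduct_mulVec_nonneg QMrho_herm fun zv => ?_
  have hform : star zv ⬝ᵥ (QMrho n m p *ᵥ zv)
      = (m:ℂ)⁻¹ * ∑ j : Fin p,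
          star (∑ y, QMw n m p j y * zv y) * (∑ y, QMw n m p j y * zv y) := by
    calc star zv ⬝ᵥ (QMrho n m p *ᵥ zv)
        = ∑ x, star (zv x) * ∑ y, ((m:ℂ)⁻¹ * ∑ j, QMw n m p j x * QMw n m p j y) * zv y := rfl
      _ = ∑ x, ∑ y, ∑ j, (m:ℂ)⁻¹ * (star (zv x) * QMw n m p j x) * (QMw n m p j y * zv y) := by
          refine Finset.sum_congr rfl fun x _ => ?_
          rw [Finset.mul_sum]
          refine Finset.sum_congr rfl fun y _ => ?_
          rw [show ((m:ℂ)⁻¹ * ∑ j, QMw n m p j x * QMw n m p j y) * zv y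
            = ∑ j, ((m:ℂ)⁻¹ * (QMw n m p j x * QMw n m p j y)) * zv y by
              rw [Finset.mul_sum, Finset.sum_mul]]
          rw [Finset.mul_sum]
          refine Finset.sum_congr rfl fun j _ => by ring
      _ = ∑ j, ∑ x, ∑ y, (m:ℂ)⁻¹ * (star (zv x) * QMw n m p j x) * (QMw n m p j y * zv y) := by
          have h1 : ∀ x : Fin n × Fin m, (∑ y : Fin n × Fin m, ∑ j : Fin p,
              (m:ℂ)⁻¹ * (star (zv x) * QMw n m p j x) * (QMw n m p j y * zv y))
              = ∑ j : Fin p, ∑ y : Fin n × Fin m,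
              (m:ℂ)⁻¹ * (star (zv x) * QMw n m p j x) * (QMw n m p j y * zv y) :=
            fun x => Finset.sum_comm
          rw [Finset.sum_congr rfl fun x _ => h1 x]
          exact Finset.sum_comm
      _ = (m:ℂ)⁻¹ * ∑ j, (∑ x, star (zv x) * QMw n m p j x) * (∑ y, QMw n m p j y * zv y) := by
          rw [Finset.mul_sum]
          refine Finset.sum_congr rfl fun j _ => ?_
          rw [Finset.sum_mul_sum, Finset.mul_sum]
          refine Finset.sum_congr rfl fun x _ => ?_
          rw [Finset.mul_sum]
          refine Finset.sum_congr rfl fun y _ => by ring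
      _ = (m:ℂ)⁻¹ * ∑ j, star (∑ y, QMw n m p j y * zv y) * (∑ y, QMw n m p j y * zv y) := by
          congr 1
          refine Finset.sum_congr rfl fun j _ => ?_
          congr 1
          rw [star_sum]
          refine Finset.sum_congr rfl fun y _ => ?_
          rw [star_mul', QMw_real]
          ring
  rw [hform]
  refine mul_nonneg ?_ (Finset.sum_nonneg fun j _ => star_mul_self_nonneg _)
  rw [show ((m:ℂ))⁻¹ = (((m:ℝ)⁻¹ : ℝ) : ℂ) by push_cast; ring]
  exact Complex.zero_le_real.mpr (by positivity)

lemma QMrho_trace (hn : 0 < n) (hp : 0 < p) (hm : m = n * p) : (QMrho n m p).trace = 1 := by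
  have h1 : (QMrho n m p).trace
      = (m:ℂ)⁻¹ * ∑ j : Fin p, ∑ x : Fin n × Fin m, QMw n m p j x * QMw n m p j x := by
    rw [show (QMrho n m p).trace
      = ∑ x : Fin n × Fin m, ((m:ℂ)⁻¹ * ∑ j, QMw n m p j x * QMw n m p j x) from rfl]
    rw [← Finset.mul_sum, Finset.sum_comm]
  rw [h1, Finset.sum_congr rfl fun j _ => by rw [QMww hn hm j j, if_pos rfl]]
  rw [Finset.sum_const, Finset.card_univ, Fintype.card_fin, nsmul_eq_mul]
  have hm0 : (m:ℂ) ≠ 0 := by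
    have : 0 < m := by rw [hm]; exact Nat.mul_pos hn hp
    exact_mod_cast this.ne'
  rw [hm]
  push_cast
  rw [mul_inv]
  field_simp


lemma QMrho_trB (hn : 0 < n) (hp : 0 < p) (hm : m = n * p) :
    trB (QMrho n m p) = ((n : ℂ))⁻¹ • (1 : Matrix (Fin n) (Fin n) ℂ) := by
  ext a a'
  have hexp : trB (QMrho n m p) a a'
      = (m:ℂ)⁻¹ * ∑ j : Fin p, ∑ b : Fin m,
          (if ((b : ℕ) = (a : ℕ) + n * (j : ℕ) ∧ (b : ℕ) = (a' : ℕ) + n * (j : ℕ))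
          then (1:ℂ) else 0) := by
    rw [show trB (QMrho n m p) a a'
      = ∑ b : Fin m, ((m:ℂ)⁻¹ * ∑ j, QMw n m p j (a, b) * QMw n m p j (a', b)) from rfl]
    rw [← Finset.mul_sum, Finset.sum_comm]
    congr 1
    refine Finset.sum_congr rfl fun j _ => Finset.sum_congr rfl fun b _ => ?_
    unfold QMw
    by_cases h1 : ((b:Fin m) : ℕ) = (a : ℕ) + n * (j : ℕ) <;>
      by_cases h2 : ((b:Fin m) : ℕ) = (a' : ℕ) + n * (j : ℕ) <;>
        simp [h1, h2]
  rw [hexp]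
  by_cases haa : a = a'
  · subst haa
    have hrow : ∀ j : Fin p, (∑ b : Fin m,
        if ((b : ℕ) = (a : ℕ) + n * (j : ℕ) ∧ (b : ℕ) = (a : ℕ) + n * (j : ℕ))
        then (1:ℂ) else 0) = 1 := by
      intro j
      rw [Fintype.sum_eq_single (⟨(a : ℕ) + n * (j : ℕ), QMhb hm a j⟩ : Fin m)
        (fun b hb => by rw [if_neg]; rintro ⟨h1, -⟩; exact hb (Fin.ext h1))]
      rw [if_pos ⟨rfl, rfl⟩]
    rw [Finset.sum_congr rfl fun j _ => hrow j]
    rw [Finset.sum_const, Finset.card_univ, Fintype.card_fin, nsmul_eq_mul, mul_one]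
    rw [Matrix.smul_apply, Matrix.one_apply_eq, smul_eq_mul, mul_one]
    rw [hm]
    push_cast
    rw [mul_inv]
    have hn0 : (n:ℂ) ≠ 0 := by exact_mod_cast hn.ne'
    have hp0 : (p:ℂ) ≠ 0 := by exact_mod_cast hp.ne'
    field_simp
  · have hzero : ∀ j : Fin p, (∑ b : Fin m,
        if ((b : ℕ) = (a : ℕ) + n * (j : ℕ) ∧ (b : ℕ) = (a' : ℕ) + n * (j : ℕ))
        then (1:ℂ) else 0) = 0 := by
      intro j
      refine Finset.sum_eq_zero fun b _ => ?_
      rw [if_neg]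
      rintro ⟨h1, h2⟩
      exact haa (Fin.ext (by omega))
    rw [Finset.sum_congr rfl fun j _ => hzero j]
    simp [Matrix.one_apply_ne haa]

lemma QMrho_trA (hn : 0 < n) (hp : 0 < p) (hm : m = n * p) :
    trA (QMrho n m p) = ((m : ℂ))⁻¹ • (1 : Matrix (Fin m) (Fin m) ℂ) := by
  ext b b'
  have hexp : trA (QMrho n m p) b b'
      = (m:ℂ)⁻¹ * ∑ a : Fin n, ∑ j : Fin p,
          (if ((b : ℕ) = (a : ℕ) + n * (j : ℕ) ∧ (b' : ℕ) = (a : ℕ) + n * (j : ℕ))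
          then (1:ℂ) else 0) := by
    rw [show trA (QMrho n m p) b b'
      = ∑ a : Fin n, ((m:ℂ)⁻¹ * ∑ j, QMw n m p j (a, b) * QMw n m p j (a, b')) from rfl]
    rw [← Finset.mul_sum]
    congr 1
    refine Finset.sum_congr rfl fun a _ => Finset.sum_congr rfl fun j _ => ?_
    unfold QMw
    by_cases h1 : ((b:Fin m) : ℕ) = (a : ℕ) + n * (j : ℕ) <;>
      by_cases h2 : ((b':Fin m) : ℕ) = (a : ℕ) + n * (j : ℕ) <;>
        simp [h1, h2]
  rw [hexp]
  by_cases hbb : b = b'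
  · subst hbb
    set a₀ : Fin n := ⟨(b : ℕ) % n, Nat.mod_lt _ hn⟩ with ha₀
    have hdiv : (b : ℕ) / n < p := by
      have hb : (b:ℕ) < n * p := by rw [← hm]; exact b.isLt
      exact Nat.div_lt_of_lt_mul hb
    set j₀ : Fin p := ⟨(b : ℕ) / n, hdiv⟩ with hj₀
    have hcond : ∀ (a : Fin n) (j : Fin p),
        ((b : ℕ) = (a : ℕ) + n * (j : ℕ)) ↔ (a = a₀ ∧ j = j₀) := by
      intro a j
      constructor
      · intro h
        have hmod : (b:ℕ) % n = (a:ℕ) := by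
          rw [h, Nat.add_mul_mod_self_left, Nat.mod_eq_of_lt a.isLt]
        have hdiv2 : (b:ℕ) / n = (j:ℕ) := by
          rw [h, Nat.add_mul_div_left _ _ hn, Nat.div_eq_of_lt a.isLt, zero_add]
        exact ⟨Fin.ext hmod.symm, Fin.ext hdiv2.symm⟩
      · rintro ⟨rfl, rfl⟩
        rw [ha₀]
        simp only []
        exact (Nat.mod_add_div (b:ℕ) n).symm
    have hsum1 : ∑ a : Fin n, ∑ j : Fin p,
        (if ((b : ℕ) = (a : ℕ) + n * (j : ℕ) ∧ (b : ℕ) = (a : ℕ) + n * (j : ℕ))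
        then (1:ℂ) else 0) = 1 := by
      rw [Fintype.sum_eq_single a₀ (fun a ha => Finset.sum_eq_zero fun j _ => by
        rw [if_neg]; rintro ⟨h1, -⟩; exact ha ((hcond a j).mp h1).1)]
      rw [Fintype.sum_eq_single j₀ (fun j hj => by
        rw [if_neg]; rintro ⟨h1, -⟩; exact hj ((hcond a₀ j).mp h1).2)]
      rw [if_pos ⟨((hcond a₀ j₀).mpr ⟨rfl, rfl⟩), ((hcond a₀ j₀).mpr ⟨rfl, rfl⟩)⟩]
    rw [hsum1, Matrix.smul_apply, Matrix.one_apply_eq, smul_eq_mul, mul_one]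
  · have hzero : ∑ a : Fin n, ∑ j : Fin p,
        (if ((b : ℕ) = (a : ℕ) + n * (j : ℕ) ∧ (b' : ℕ) = (a : ℕ) + n * (j : ℕ))
        then (1:ℂ) else 0) = 0 := by
      refine Finset.sum_eq_zero fun a _ => Finset.sum_eq_zero fun j _ => ?_
      rw [if_neg]
      rintro ⟨h1, h2⟩
      exact hbb (Fin.ext (by omega))
    rw [hzero]
    simp [Matrix.one_apply_ne hbb]


lemma QMrho_sq (hn : 0 < n) (hp : 0 < p) (hm : m = n * p) :
    QMrho n m p * QMrho n m p = ((p:ℂ))⁻¹ • QMrho n m p := by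
  have hn0 : (n:ℂ) ≠ 0 := by exact_mod_cast hn.ne'
  have hp0 : (p:ℂ) ≠ 0 := by exact_mod_cast hp.ne'
  have hconst : (m:ℂ)⁻¹ * (m:ℂ)⁻¹ * (n:ℂ) = (p:ℂ)⁻¹ * (m:ℂ)⁻¹ := by
    rw [hm]
    push_cast
    rw [mul_inv]
    field_simp
  ext x y
  rw [Matrix.mul_apply]
  have h1 : ∀ z, QMrho n m p x z * QMrho n m p z y
      = ∑ j, ∑ k, ((m:ℂ)⁻¹ * (m:ℂ)⁻¹) *
          (QMw n m p j x * ((QMw n m p j z * QMw n m p k z) * QMw n m p k y)) := by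
    intro z
    rw [show QMrho n m p x z = (m:ℂ)⁻¹ * ∑ j, QMw n m p j x * QMw n m p j z from rfl,
        show QMrho n m p z y = (m:ℂ)⁻¹ * ∑ k, QMw n m p k z * QMw n m p k y from rfl]
    rw [mul_mul_mul_comm, Finset.sum_mul_sum, Finset.mul_sum]
    refine Finset.sum_congr rfl fun j _ => ?_
    rw [Finset.mul_sum]
    refine Finset.sum_congr rfl fun k _ => by ring
  rw [Finset.sum_congr rfl fun z _ => h1 z]
  have hswap : (∑ z : Fin n × Fin m, ∑ j : Fin p, ∑ k : Fin p, ((m:ℂ)⁻¹ * (m:ℂ)⁻¹) *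
          (QMw n m p j x * ((QMw n m p j z * QMw n m p k z) * QMw n m p k y)))
      = ∑ j : Fin p, ∑ k : Fin p, ∑ z : Fin n × Fin m, ((m:ℂ)⁻¹ * (m:ℂ)⁻¹) *
          (QMw n m p j x * ((QMw n m p j z * QMw n m p k z) * QMw n m p k y)) := by
    rw [show (∑ z : Fin n × Fin m, ∑ j : Fin p, ∑ k : Fin p, ((m:ℂ)⁻¹ * (m:ℂ)⁻¹) *
          (QMw n m p j x * ((QMw n m p j z * QMw n m p k z) * QMw n m p k y)))
        = ∑ j : Fin p, ∑ z : Fin n × Fin m, ∑ k : Fin p, ((m:ℂ)⁻¹ * (m:ℂ)⁻¹) *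
          (QMw n m p j x * ((QMw n m p j z * QMw n m p k z) * QMw n m p k y)) from
      Finset.sum_comm]
    exact Finset.sum_congr rfl fun j _ => Finset.sum_comm
  rw [hswap]
  have hval : ∀ j k : Fin p, (∑ z : Fin n × Fin m, ((m:ℂ)⁻¹ * (m:ℂ)⁻¹) *
          (QMw n m p j x * ((QMw n m p j z * QMw n m p k z) * QMw n m p k y)))
      = (((m:ℂ)⁻¹ * (m:ℂ)⁻¹) * (QMw n m p j x * QMw n m p k y)) *
          (if j = k then (n:ℂ) else 0) := by
    intro j k
    rw [← QMww hn hm j k, Finset.mul_sum]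
    refine Finset.sum_congr rfl fun z _ => by ring
  rw [Finset.sum_congr rfl fun j _ => Finset.sum_congr rfl fun k _ => hval j k]
  rw [Finset.sum_congr rfl fun j _ => Fintype.sum_eq_single j
    (fun k hk => by rw [if_neg (fun h => hk h.symm), mul_zero])]
  rw [Matrix.smul_apply,
    show QMrho n m p x y = (m:ℂ)⁻¹ * ∑ j, QMw n m p j x * QMw n m p j y from rfl,
    smul_eq_mul, Finset.mul_sum, Finset.mul_sum]
  refine Finset.sum_congr rfl fun j _ => ?_
  rw [if_pos rfl]
  rw [show ((m:ℂ)⁻¹ * (m:ℂ)⁻¹ * (QMw n m p j x * QMw n m p j y)) * (n:ℂ)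
    = ((m:ℂ)⁻¹ * (m:ℂ)⁻¹ * (n:ℂ)) * (QMw n m p j x * QMw n m p j y) by ring, hconst]
  ring

lemma QM_ev_dichotomy {ι : Type*} [Fintype ι] [DecidableEq ι] {ρ : Matrix ι ι ℂ}
    (h : ρ.IsHermitian) (c : ℝ) (hsq : ρ * ρ = (c:ℂ) • ρ) (i : ι) :
    h.eigenvalues i = 0 ∨ h.eigenvalues i = c := by
  have hv := h.mulVec_eigenvectorBasis i
  obtain ⟨x₀, hx₀⟩ : ∃ x, (h.eigenvectorBasis i) x ≠ 0 := by
    by_contra hc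
    push_neg at hc
    have hne := h.eigenvectorBasis.orthonormal.ne_zero i
    apply hne
    ext x
    exact hc x
  have h2 : ρ *ᵥ (ρ *ᵥ ⇑(h.eigenvectorBasis i)) = (c:ℂ) • (ρ *ᵥ ⇑(h.eigenvectorBasis i)) := by
    rw [Matrix.mulVec_mulVec, hsq, Matrix.smul_mulVec]
  rw [hv, Matrix.mulVec_smul, hv] at h2
  have h3 := congrFun h2 x₀
  simp only [Pi.smul_apply, Complex.real_smul, smul_eq_mul] at h3
  have h4 : ((h.eigenvalues i : ℂ)) * (h.eigenvalues i : ℂ)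
      = (c:ℂ) * (h.eigenvalues i : ℂ) := by
    have h3' : ((h.eigenvalues i : ℂ) * (h.eigenvalues i : ℂ)) * (h.eigenvectorBasis i) x₀
        = ((c:ℂ) * (h.eigenvalues i : ℂ)) * (h.eigenvectorBasis i) x₀ := by
      rw [mul_assoc, mul_assoc]
      exact h3
    exact mul_right_cancel₀ hx₀ h3'
  have h5 : (h.eigenvalues i) * (h.eigenvalues i) = c * h.eigenvalues i := by
    exact_mod_cast h4
  have h6 : h.eigenvalues i * (h.eigenvalues i - c) = 0 := by ring_nf; linarith [h5]
  rcases mul_eq_zero.mp h6 with h7 | h7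
  · exact Or.inl h7
  · exact Or.inr (by linarith)

end Construction
end Helpers1

/-- for `n ∣ m` with `p = m/n`, the partition of strip type derived from
`λ = (p^n)` and `μ = (1^m)` is `ν = (n^p)`.  Consequently the maximal lexicographic
spectrum of states on `ℂ^n ⊗ ℂ^m` with margins `(1/n) I_n` and `(1/m) I_m` is the
uniform distribution `(1/p, …, 1/p)` of length `p` (padded by zeros). -/
theorem strip_divisible_and_max_spectrum (n m p : ℕ)
    (hn : 0 < n) (hp : 0 < p) (hm : m = n * p) :
    rectStrip (p, n) (1, m) = List.replicate p n ∧
      (∃ ρ : Matrix (Fin n × Fin m) (Fin n × Fin m) ℂ, ∃ hρ : ρ.PosSemidef,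
        ρ.trace = 1 ∧
        trB ρ = ((n : ℂ))⁻¹ • (1 : Matrix (Fin n) (Fin n) ℂ) ∧
        trA ρ = ((m : ℂ))⁻¹ • (1 : Matrix (Fin m) (Fin m) ℂ) ∧
        specList ρ hρ.1 =
          List.replicate p ((p : ℝ)⁻¹) ++ List.replicate (n * m - p) 0) ∧
      (∀ ρ : Matrix (Fin n × Fin m) (Fin n × Fin m) ℂ, ∀ hρ : ρ.PosSemidef,
        ρ.trace = 1 →
        trB ρ = ((n : ℂ))⁻¹ • (1 : Matrix (Fin n) (Fin n) ℂ) →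
        trA ρ = ((m : ℂ))⁻¹ • (1 : Matrix (Fin m) (Fin m) ℂ) →
        lexLe (specList ρ hρ.1)
          (List.replicate p ((p : ℝ)⁻¹) ++ List.replicate (n * m - p) 0)) := by
  have hple : p ≤ n * m := by
    have h1 : p ≤ (n * n) * p := Nat.le_mul_of_pos_left p (Nat.mul_pos hn hn)
    calc p ≤ (n * n) * p := h1
      _ = n * (n * p) := by ring
      _ = n * m := by rw [hm]
  have hcard : Fintype.card (Fin n × Fin m) = n * m := by
    simp [Fintype.card_prod]
  refine ⟨?_, ?_, ?_⟩
  · unfold rectStrip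
    have hfuel : p < (p, n).1 * (p, n).2 + 1 := by
      have : p ≤ p * n := Nat.le_mul_of_pos_right p hn
      simpa using Nat.lt_succ_of_le this
    have := part1 n hn p ((p, n).1 * (p, n).2 + 1) hfuel
    rw [hm]
    exact this
  · refine ⟨QMrho n m p, QMrho_psd, QMrho_trace hn hp hm, QMrho_trB hn hp hm,
      QMrho_trA hn hp hm, ?_⟩
    set h := (QMrho_psd : (QMrho n m p).PosSemidef).1 with hh
    have hev : ∀ i, h.eigenvalues i = 0 ∨ h.eigenvalues i = (p:ℝ)⁻¹ := fun i =>
      QM_ev_dichotomy h ((p:ℝ)⁻¹)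
        (by rw [QMrho_sq hn hp hm]; congr 1; push_cast; ring) i
    have hp0 : ((p:ℝ)) ≠ 0 := by exact_mod_cast hp.ne'
    have hsum : ∑ i, h.eigenvalues i = 1 := by
      have h1 := QM.trace_eq h
      rw [QMrho_trace hn hp hm] at h1
      have h2 : ((∑ i, h.eigenvalues i : ℝ) : ℂ) = 1 := by push_cast; rw [← h1]
      exact_mod_cast h2
    set k := (Finset.univ.filter
      (fun i : Fin n × Fin m => h.eigenvalues i = (p:ℝ)⁻¹)).card with hk
    have hcount : (k : ℝ) * (p:ℝ)⁻¹ = 1 := by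
      rw [← hsum, ← Finset.sum_filter_add_sum_filter_not Finset.univ
        (fun i : Fin n × Fin m => h.eigenvalues i = (p:ℝ)⁻¹)]
      have hA : ∑ i ∈ Finset.univ.filter
          (fun i : Fin n × Fin m => h.eigenvalues i = (p:ℝ)⁻¹), h.eigenvalues i
          = (k : ℝ) * (p:ℝ)⁻¹ := by
        rw [Finset.sum_congr rfl (fun i hi => (Finset.mem_filter.mp hi).2),
          Finset.sum_const, nsmul_eq_mul, hk]
      have hB : ∑ i ∈ Finset.univ.filter
          (fun i : Fin n × Fin m => ¬ h.eigenvalues i = (p:ℝ)⁻¹), h.eigenvalues i = 0 :=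
        Finset.sum_eq_zero fun i hi => by
          rcases hev i with h' | h'
          · exact h'
          · exact absurd h' (Finset.mem_filter.mp hi).2
      rw [hA, hB, add_zero]
    have hkp : k = p := by
      have : (k:ℝ) = (p:ℝ) := by field_simp at hcount; exact_mod_cast hcount
      exact_mod_cast this
    have hbs := binary_sorted (p:ℝ)⁻¹ (by positivity) (specList (QMrho n m p) h)
      (QM.specList_sorted h) (fun x hx => by
        obtain ⟨i, hi⟩ := (QM.mem_specList h).mp hx
        rw [← hi]
        exact hev i)
    rw [hbs, QM.specList_count, ← hk, hkp, QM.specList_length, hcard]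
  · intro ρ hρ htr htrB htrA
    apply lex_aux (p:ℝ)⁻¹ p (n * m - p)
    · rw [QM.specList_length, hcard]
      omega
    · intro x hx
      obtain ⟨i, hi⟩ := (QM.mem_specList hρ.1).mp hx
      rw [← hi]
      exact ⟨hρ.eigenvalues_nonneg i, QM.ev_le n m p hn hp hm ρ hρ htrA i⟩
    · rw [QM.specList_sum]
      have h1 := QM.trace_eq hρ.1
      rw [htr] at h1
      have h2 : ((∑ i, hρ.1.eigenvalues i : ℝ) : ℂ) = 1 := by push_cast; rw [← h1]
      have h3 : ∑ i, hρ.1.eigenvalues i = 1 := by exact_mod_cast h2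
      rw [h3]
      have hp0 : ((p:ℝ)) ≠ 0 := by exact_mod_cast hp.ne'
      field_simp
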